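/- If (G,σ) is a simple signed graph on n vertices, then its zero-free chromatic number satisfies γ*(G,σ) ≤ ⌈n/2⌉. -/
import Mathlib


open SimpleGraph

/-- A zero-free coloring of `(G, σ)` with `k` colors: a map into
`{-k, …, -1, 1, …, k}` with `c u ≠ σ(uv) * c v` on every edge. -/
def IsZeroFreeColoring {V : Type*} (G : SimpleGraph V) (σ : Sym2 V → ℤˣ) (k : ℕ)
    (c : V → ℤ) : Prop :=
  (∀ v, 1 ≤ |c v| ∧ |c v| ≤ (k : ℤ)) ∧
    ∀ u v : V, G.Adj u v → c u ≠ (σ s(u, v) : ℤ) * c v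

/-- Zaslavsky's zero-free chromatic number `γ*`. -/
noncomputable def gammaStar {V : Type*} (G : SimpleGraph V) (σ : Sym2 V → ℤˣ) : ℕ :=
  sInf {k : ℕ | ∃ c : V → ℤ, IsZeroFreeColoring G σ k c}

/-- For a simple signed graph on `n` vertices, `γ*(G,σ) ≤ ⌈n/2⌉`. -/
theorem gammaStar_le_ceil_half {V : Type*} [Fintype V] (G : SimpleGraph V)
    (σ : Sym2 V → ℤˣ) :
    gammaStar G σ ≤ (Fintype.card V + 1) / 2 := by
  classical
  set n := Fintype.card V with hn
  have e : V ≃ Fin n := Fintype.equivFin V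
  set m : V → ℕ := fun v => (e v : ℕ) / 2 + 1 with hm
  set c : V → ℤ := fun v =>
    if (e v : ℕ) % 2 = 0 then (m v : ℤ)
    else -(σ s(e.symm ⟨(e v : ℕ) - 1,
        lt_of_le_of_lt (Nat.sub_le _ _) (e v).2⟩, v) : ℤ) * (m v : ℤ)
    with hc
  have habs : ∀ v, |c v| = (m v : ℤ) := by
    intro v
    rw [hc]
    dsimp only
    split
    · rw [abs_of_pos]; positivity
    · rcases Int.units_eq_one_or (σ s(e.symm ⟨(e v : ℕ) - 1,
          lt_of_le_of_lt (Nat.sub_le _ _) (e v).2⟩, v)) with h | h <;>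
        rw [h] <;>
        simp only [Units.val_one, Units.val_neg, neg_neg, neg_mul, one_mul, abs_neg] <;>
        exact abs_of_nonneg (by positivity)
  apply Nat.sInf_le
  refine ⟨c, fun v => ?_, fun u v hadj => ?_⟩
  · rw [habs]
    have h1 : (e v : ℕ) < n := (e v).2
    have hmv : m v = (e v : ℕ) / 2 + 1 := rfl
    constructor
    · exact_mod_cast Nat.one_le_iff_ne_zero.mpr (by omega)
    · exact_mod_cast (by omega : m v ≤ (n + 1) / 2)
  · have hne : (e u : ℕ) ≠ (e v : ℕ) := by
      intro h
      exact hadj.ne (e.injective (Fin.ext h))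
    by_cases hdiv : (e u : ℕ) / 2 = (e v : ℕ) / 2
    · -- u and v are partners; parities differ
      have hmeq : m u = m v := by rw [hm]; dsimp only; omega
      have hpar : (e u : ℕ) % 2 ≠ (e v : ℕ) % 2 := by omega
      have hmvpos : (0 : ℤ) < (m v : ℤ) := by
        have : 0 < m v := Nat.succ_pos _
        exact_mod_cast this
      rcases Nat.even_or_odd (e u : ℕ) with heu | heu
      · -- e u even, e v odd
        have heu' : (e u : ℕ) % 2 = 0 := Nat.even_iff.mp heu
        have hev' : (e v : ℕ) % 2 = 1 := by omega
        have hpred : (e v : ℕ) - 1 = (e u : ℕ) := by omega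
        have hpartner : e.symm ⟨(e v : ℕ) - 1,
            lt_of_le_of_lt (Nat.sub_le _ _) (e v).2⟩ = u := by
          rw [show (⟨(e v : ℕ) - 1, lt_of_le_of_lt (Nat.sub_le _ _) (e v).2⟩ : Fin n)
              = e u from Fin.ext hpred]
          exact e.symm_apply_apply u
        have hcu : c u = (m v : ℤ) := by
          rw [hc]; dsimp only; rw [if_pos heu', ← hmeq]
        have hcv : c v = -(σ s(u, v) : ℤ) * (m v : ℤ) := by
          rw [hc]; dsimp only; rw [if_neg (by omega), hpartner]
        rw [hcu, hcv]
        rcases Int.units_eq_one_or (σ s(u, v)) with h | h <;> rw [h] <;>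
          intro hcontra <;>
          simp only [Units.val_one, Units.val_neg, neg_neg, neg_mul, mul_neg, one_mul,
            mul_one] at hcontra <;> omega
      · -- e u odd, e v even
        have heu' : (e u : ℕ) % 2 = 1 := Nat.odd_iff.mp heu
        have hev' : (e v : ℕ) % 2 = 0 := by omega
        have hpred : (e u : ℕ) - 1 = (e v : ℕ) := by omega
        have hpartner : e.symm ⟨(e u : ℕ) - 1,
            lt_of_le_of_lt (Nat.sub_le _ _) (e u).2⟩ = v := by
          rw [show (⟨(e u : ℕ) - 1, lt_of_le_of_lt (Nat.sub_le _ _) (e u).2⟩ : Fin n)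
              = e v from Fin.ext hpred]
          exact e.symm_apply_apply v
        have hcu : c u = -(σ s(v, u) : ℤ) * (m v : ℤ) := by
          rw [hc]; dsimp only; rw [if_neg (by omega), hpartner, hmeq]
        have hcv : c v = (m v : ℤ) := by
          rw [hc]; dsimp only; rw [if_pos hev']
        rw [hcu, hcv, Sym2.eq_swap]
        rcases Int.units_eq_one_or (σ s(u, v)) with h | h <;> rw [h] <;>
          intro hcontra <;>
          simp only [Units.val_one, Units.val_neg, neg_neg, neg_mul, mul_neg, one_mul,
            mul_one] at hcontra <;> omega
    · -- different absolute values
      intro hcontra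
      have h1 : |c u| = |(σ s(u, v) : ℤ)| * |c v| := by rw [hcontra, abs_mul]
      have habs1 : |(σ s(u, v) : ℤ)| = 1 := by
        rcases Int.units_eq_one_or (σ s(u, v)) with h | h <;> rw [h] <;> simp
      rw [habs1, one_mul, habs, habs] at h1
      have h2 : m u = m v := by exact_mod_cast h1
      rw [hm] at h2
      dsimp only at h2
      omega
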